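/- For every totally nonnegative 3×3 matrix A = (a_{i,j}), 2·a_{1,1}·a_{2,2}·a_{3,3} ≥ a_{1,2}·a_{2,3}·a_{3,1} + a_{1,3}·a_{2,1}·a_{3,2}. -/

import Mathlib

open Matrix BigOperators

/-- An `n × n` real matrix is totally nonnegative if all its minors are nonnegative. -/
def TotallyNonneg {n : ℕ} (A : Matrix (Fin n) (Fin n) ℝ) : Prop :=
  ∀ (k : ℕ) (f g : Fin k → Fin n), StrictMono f → StrictMono g →
    0 ≤ (A.submatrix f g).det

lemma entry_nonneg (A : Matrix (Fin 3) (Fin 3) ℝ) (hA : TotallyNonneg A)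
    (i j : Fin 3) : 0 ≤ A i j := by
  have h := hA 1 ![i] ![j] (Subsingleton.strictMono _) (Subsingleton.strictMono _)
  rw [Matrix.det_fin_one] at h
  simpa [Matrix.det_fin_one] using h

lemma minor2_nonneg (A : Matrix (Fin 3) (Fin 3) ℝ) (hA : TotallyNonneg A)
    {i j c d : Fin 3} (hij : i < j) (hcd : c < d) :
    0 ≤ A i c * A j d - A i d * A j c := by
  have hf : StrictMono (![i, j] : Fin 2 → Fin 3) := by
    intro a b hab
    fin_cases a <;> fin_cases b <;> simp_all <;> omega
  have hg : StrictMono (![c, d] : Fin 2 → Fin 3) := by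
    intro a b hab
    fin_cases a <;> fin_cases b <;> simp_all <;> omega
  have h := hA 2 ![i, j] ![c, d] hf hg
  rw [Matrix.det_fin_two] at h
  simpa [Matrix.det_fin_two] using h

theorem stmt12 (A : Matrix (Fin 3) (Fin 3) ℝ) (hA : TotallyNonneg A) :
    A 0 1 * A 1 2 * A 2 0 + A 0 2 * A 1 0 * A 2 1 ≤ 2 * (A 0 0 * A 1 1 * A 2 2) := by
  have e01 := entry_nonneg A hA 0 1
  have e10 := entry_nonneg A hA 1 0
  have e22 := entry_nonneg A hA 2 2
  have m1 : 0 ≤ A 0 0 * A 1 1 - A 0 1 * A 1 0 :=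
    minor2_nonneg A hA (by decide) (by decide)
  have m2 : 0 ≤ A 1 0 * A 2 2 - A 1 2 * A 2 0 :=
    minor2_nonneg A hA (by decide) (by decide)
  have m3 : 0 ≤ A 0 1 * A 2 2 - A 0 2 * A 2 1 :=
    minor2_nonneg A hA (by decide) (by decide)
  nlinarith [mul_nonneg e01 m2, mul_nonneg e10 m3, mul_nonneg e22 m1]
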